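/- Let p_α : ℂ^n → ℂ for α = 1, …, m be differentiable functions, and define W(c, φ) = ∑_α c_α·p_α(φ) for coefficients c ∈ ℂ^m. Suppose φ* : ℂ^m → ℂ^n is a differentiable family of points such that for every c ∈ ℂ^m: W(c, φ*(c)) = 0 and ∂W/∂φ_i (c, φ*(c)) = 0 for all i = 1, …, n. Then for every c ∈ ℂ^m and every α, p_α(φ*(c)) = 0. (If a SUSY vacuum with vanishing superpotential persists under arbitrary perturbations of the generic coefficients, then every term of the superpotential vanishes individually at the vacuum.) -/

import Mathlib

/-- If a SUSY vacuum with vanishing superpotential `W(c, φ) = ∑ α, c α * p α φ` persists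
under arbitrary perturbations of the generic coefficients `c`, then every term of the
superpotential vanishes individually at the vacuum. -/
theorem generic_terms_vanish (n m : ℕ)
    (p : Fin m → (Fin n → ℂ) → ℂ) (hp : ∀ α, Differentiable ℂ (p α))
    (φs : (Fin m → ℂ) → (Fin n → ℂ)) (hφs : Differentiable ℂ φs)
    (hW0 : ∀ c : Fin m → ℂ, ∑ α, c α * p α (φs c) = 0)
    (hdW : ∀ (c : Fin m → ℂ) (i : Fin n),
      ∑ α, c α * fderiv ℂ (p α) (φs c) (Pi.single i 1) = 0) :
    ∀ (c : Fin m → ℂ) (α : Fin m), p α (φs c) = 0 := by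
  intro c β
  set Dφ : (Fin m → ℂ) →L[ℂ] (Fin n → ℂ) := fderiv ℂ φs c with hDφ
  set D : Fin m → ((Fin n → ℂ) →L[ℂ] ℂ) := fun α => fderiv ℂ (p α) (φs c) with hD
  -- derivative of each term
  have hterm : ∀ α : Fin m, HasFDerivAt (fun c' => c' α * p α (φs c'))
      (p α (φs c) • ContinuousLinearMap.proj α + c α • ((D α).comp Dφ)) c := by
    intro α
    have h1 : HasFDerivAt (fun c' : Fin m → ℂ => c' α)
        (ContinuousLinearMap.proj α : (Fin m → ℂ) →L[ℂ] ℂ) c :=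
      (ContinuousLinearMap.proj α : (Fin m → ℂ) →L[ℂ] ℂ).hasFDerivAt
    have h2 : HasFDerivAt (fun c' => p α (φs c')) ((D α).comp Dφ) c :=
      ((hp α (φs c)).hasFDerivAt).comp c ((hφs c).hasFDerivAt)
    have := h1.mul h2
    rwa [add_comm] at this
  set L : (Fin m → ℂ) →L[ℂ] ℂ :=
    ∑ α, (p α (φs c) • ContinuousLinearMap.proj α + c α • ((D α).comp Dφ)) with hL
  have hsum : HasFDerivAt (fun c' => ∑ α, c' α * p α (φs c')) L c :=
    HasFDerivAt.fun_sum (fun α _ => hterm α)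
  have hzero : HasFDerivAt (fun c' => ∑ α, c' α * p α (φs c')) (0 : (Fin m → ℂ) →L[ℂ] ℂ) c := by
    have : (fun c' : Fin m → ℂ => ∑ α, c' α * p α (φs c')) = fun _ => (0:ℂ) := by
      funext c'; exact hW0 c'
    rw [this]; exact hasFDerivAt_const (0:ℂ) c
  have hLeq : L = 0 := hsum.unique hzero
  have hval : L (Pi.single β 1) = 0 := by rw [hLeq]; rfl
  set v : Fin n → ℂ := Dφ (Pi.single β 1) with hv
  have hvrep : (v : Fin n → ℂ) = ∑ i, v i • (Pi.single i 1 : Fin n → ℂ) := by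
    funext j
    simp [Finset.sum_apply, Pi.single_apply, eq_comm]
  have hDv : ∀ α, D α v = ∑ i, v i * D α (Pi.single i 1) := by
    intro α
    conv_lhs => rw [hvrep]
    rw [map_sum]
    simp [smul_eq_mul]
  have hexp : L (Pi.single β 1) = p β (φs c) + ∑ α, c α * D α v := by
    rw [hL]
    simp only [ContinuousLinearMap.sum_apply, ContinuousLinearMap.add_apply,
      ContinuousLinearMap.smul_apply, ContinuousLinearMap.proj_apply,
      ContinuousLinearMap.comp_apply, smul_eq_mul]
    rw [Finset.sum_add_distrib]
    congr 1
    · rw [Finset.sum_eq_single β]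
      · simp
      · intro b _ hb; simp [Pi.single_apply, hb]
      · intro h; exact absurd (Finset.mem_univ β) h
  have hcross : ∑ α, c α * D α v = 0 := by
    calc ∑ α, c α * D α v = ∑ α, ∑ i, c α * (v i * D α (Pi.single i 1)) := by
          simp_rw [hDv, Finset.mul_sum]
      _ = ∑ i, v i * ∑ α, c α * D α (Pi.single i 1) := by
          rw [Finset.sum_comm]
          congr 1; funext i
          rw [Finset.mul_sum]
          congr 1; funext α; ring
      _ = 0 := by simp [hD, hdW c]
  have := hval
  rw [hexp, hcross, add_zero] at this
  exact this
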